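/- Every Mathias generic real is canonically immune, with modulus of immunity the identity function i ↦ i. -/

import Mathlib

/-- The `e`-th computably enumerable set. -/
def WSet (e : ℕ) : Set ℕ := {n | ((Denumerable.ofNat Nat.Partrec.Code e).eval n).Dom}

/-- A canonical numbering: a computable surjection onto the finite subsets of `ℕ`. -/
def CanonicalNumbering (D : ℕ → Finset ℕ) : Prop := Computable D ∧ Function.Surjective D

/-- `R` is canonically immune with modulus of immunity `h`. -/
def CanonImmuneMod (R : Set ℕ) (h : ℕ → ℕ) : Prop :=
  R.Infinite ∧ ∀ D : ℕ → Finset ℕ, CanonicalNumbering D →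
    ∀ᶠ i in Filter.atTop, ↑(D i) ⊆ R → (D i).card ≤ h i

/-- `R` is canonically immune. -/
def CanonicallyImmune (R : Set ℕ) : Prop :=
  ∃ h : ℕ → ℕ, Computable h ∧ CanonImmuneMod R h

/-- `R` is Δ⁰₂ (limit computable). -/
def Delta02 (R : Set ℕ) : Prop :=
  ∃ f : ℕ → ℕ → Bool, Computable₂ f ∧
    ∀ n, ∀ᶠ s in Filter.atTop, (f s n = true ↔ n ∈ R)

/-- Partial functions recursive in an oracle `O : ℕ → ℕ`. -/
inductive RecursiveInOracleFn (O : ℕ → ℕ) : (ℕ →. ℕ) → Prop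
  | zero : RecursiveInOracleFn O fun _ => 0
  | succ : RecursiveInOracleFn O fun n => Part.some (n + 1)
  | left : RecursiveInOracleFn O fun n => Part.some (Nat.unpair n).1
  | right : RecursiveInOracleFn O fun n => Part.some (Nat.unpair n).2
  | oracle : RecursiveInOracleFn O fun n => Part.some (O n)
  | pair {f g} : RecursiveInOracleFn O f → RecursiveInOracleFn O g →
      RecursiveInOracleFn O fun n => Nat.pair <$> f n <*> g n
  | comp {f g} : RecursiveInOracleFn O f → RecursiveInOracleFn O g →
      RecursiveInOracleFn O fun n => g n >>= f
  | prec {f g} : RecursiveInOracleFn O f → RecursiveInOracleFn O g →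
      RecursiveInOracleFn O (Nat.unpaired fun a n =>
        n.rec (f a) fun y IH => do let i ← IH; g (Nat.pair a (Nat.pair y i)))
  | rfind {f} : RecursiveInOracleFn O f →
      RecursiveInOracleFn O fun a => Nat.rfind fun n => (fun m => m = 0) <$> f (Nat.pair a n)

open Classical in
/-- Characteristic function of a set of naturals. -/
noncomputable def chi (A : Set ℕ) : ℕ → ℕ := fun n => if n ∈ A then 1 else 0

/-- `A` is Turing reducible to the oracle `O`. -/
def TuringReducibleTo (A : Set ℕ) (O : ℕ → ℕ) : Prop :=
  RecursiveInOracleFn O fun n => Part.some (chi A n)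

/-- `A` is Turing reducible to the set `B`. -/
def TuringReducibleSets (A B : Set ℕ) : Prop := TuringReducibleTo A (chi B)

/-- The oracle given by a real `G ∈ 2^ω`. -/
def oracleOf (G : ℕ → Bool) : ℕ → ℕ := fun n => cond (G n) 1 0

/-- `S` is computably enumerable relative to the real `G`. -/
def CEIn (G : ℕ → Bool) (S : Set ℕ) : Prop :=
  ∃ f : ℕ →. ℕ, RecursiveInOracleFn (oracleOf G) f ∧ S = {n | (f n).Dom}

/-- The length-`n` initial segment of a real. -/
def initSeg (G : ℕ → Bool) (n : ℕ) : List Bool := List.ofFn fun i : Fin n => G i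

/-- A Σ⁰₂ set of binary strings. -/
def Sigma02Strings (X : Set (List Bool)) : Prop :=
  ∃ p : List Bool → ℕ → ℕ → Bool,
    (Computable fun x : List Bool × ℕ × ℕ => p x.1 x.2.1 x.2.2) ∧
    X = {σ | ∃ m, ∀ k, p σ m k = true}

/-- A (Cohen) 2-generic real. -/
def TwoGeneric (G : ℕ → Bool) : Prop :=
  ∀ X : Set (List Bool), Sigma02Strings X →
    (∃ n, initSeg G n ∈ X) ∨ (∃ n, ∀ τ, initSeg G n <+: τ → τ ∉ X)

/-- A computably enumerable set of binary strings. -/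
def CEStrings (X : Set (List Bool)) : Prop :=
  ∃ p : List Bool → ℕ → Bool, Computable₂ p ∧ X = {σ | ∃ s, p σ s = true}

/-- A dense set of binary strings. -/
def DenseStrings (X : Set (List Bool)) : Prop := ∀ σ, ∃ τ, σ <+: τ ∧ τ ∈ X

/-- A weakly 1-generic real. -/
def Weakly1Generic (G : ℕ → Bool) : Prop :=
  ∀ X : Set (List Bool), CEStrings X → DenseStrings X → ∃ n, initSeg G n ∈ X

/-- A hyperimmune set: infinite and its increasing enumeration (principal function)
is not dominated by any computable function. -/
def Hyperimmune (R : Set ℕ) : Prop :=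
  R.Infinite ∧ ∀ f : ℕ → ℕ, Computable f →
    ∃ᶠ n in Filter.atTop, f n < Nat.nth (· ∈ R) n

/-- A (computable) Mathias condition `[a, A]`. -/
structure MathiasCond where
  a : Finset ℕ
  A : Set ℕ
  infinite : A.Infinite
  comp : ComputablePred (· ∈ A)
  lt : ∀ x ∈ a, ∀ y ∈ A, x < y

/-- `c'` extends `c` as a Mathias condition. -/
def MathiasCond.Extends (c' c : MathiasCond) : Prop :=
  c.a ⊆ c'.a ∧ (↑c'.a \ ↑c.a : Set ℕ) ⊆ c.A ∧ c'.A ⊆ c.A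

/-- A dense family of Mathias conditions. -/
def MathiasDense (𝒳 : Set MathiasCond) : Prop := ∀ c, ∃ c' ∈ 𝒳, c'.Extends c

/-- `R ∈ [a, A]`. -/
def MathiasCond.Mem (c : MathiasCond) (R : Set ℕ) : Prop :=
  ↑c.a ⊆ R ∧ R ⊆ ↑c.a ∪ c.A

/-- `R` meets the family `𝒳` of Mathias conditions. -/
def Meets (R : Set ℕ) (𝒳 : Set MathiasCond) : Prop := ∃ c ∈ 𝒳, c.Mem R

/-- The arithmetical sets of naturals: closure of the computable sets under
complementation and projection. -/
inductive Arithmetical : Set ℕ → Prop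
  | of_computable {S : Set ℕ} : ComputablePred (· ∈ S) → Arithmetical S
  | compl {S : Set ℕ} : Arithmetical S → Arithmetical {n | n ∉ S}
  | proj {S : Set ℕ} : Arithmetical S → Arithmetical {n | ∃ m, Nat.pair n m ∈ S}

open Classical in
/-- `n` codes the Mathias condition `c`: its first component is the canonical code of the
finite set and its second component is an index for the characteristic function of `A`. -/
noncomputable def CondCode (n : ℕ) (c : MathiasCond) : Prop :=
  n.unpair.1 = Encodable.encode c.a ∧
  ∀ x, ((Denumerable.ofNat Nat.Partrec.Code n.unpair.2)).eval x = Part.some (if x ∈ c.A then 1 else 0)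

/-- The set of codes of members of `𝒳`. -/
def CodesOf (𝒳 : Set MathiasCond) : Set ℕ := {n | ∃ c ∈ 𝒳, CondCode n c}

/-- A Mathias generic real: one meeting every arithmetically definable dense family
of Mathias conditions. -/
def MathiasGeneric (R : Set ℕ) : Prop :=
  ∀ 𝒳 : Set MathiasCond, Arithmetical (CodesOf 𝒳) → MathiasDense 𝒳 → Meets R 𝒳

/-- A Σ⁰₃ set of naturals. -/
def Sigma03Set (S : Set ℕ) : Prop :=
  ∃ p : ℕ → ℕ → ℕ → ℕ → Bool,
    (Computable fun x : ℕ × ℕ × ℕ × ℕ => p x.1 x.2.1 x.2.2.1 x.2.2.2) ∧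
    S = {n | ∃ a, ∀ b, ∃ c, p n a b c = true}

/-- A Mathias 3-generic real. -/
def Mathias3Generic (R : Set ℕ) : Prop :=
  ∀ 𝒳 : Set MathiasCond, Sigma03Set (CodesOf 𝒳) → MathiasDense 𝒳 → Meets R 𝒳

/-- An effectively immune set. -/
def EffectivelyImmune (Q : Set ℕ) : Prop :=
  Q.Infinite ∧ ∃ h : ℕ → ℕ, Computable h ∧
    ∀ e, WSet e ⊆ Q → (WSet e).Finite ∧ (WSet e).ncard ≤ h e

/-- The basic cylinder of 2^ω determined by the finite string `σ`. -/
def Cyl (σ : List Bool) : Set (ℕ → Bool) := {G | ∀ i : Fin σ.length, G i = σ.get i}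

/-- The open subset of 2^ω generated by a set of strings. -/
def OpenFrom (P : Set (List Bool)) : Set (ℕ → Bool) := ⋃ σ ∈ P, Cyl σ

/-- A uniformly c.e. sequence of sets of strings. -/
def UniformlyCE (P : ℕ → Set (List Bool)) : Prop :=
  ∃ f : ℕ → List Bool → ℕ → Bool,
    (Computable fun x : ℕ × List Bool × ℕ => f x.1 x.2.1 x.2.2) ∧
    ∀ n σ, σ ∈ P n ↔ ∃ s, f n σ s = true

/-- `μ` is the uniform (fair-coin) product measure on 2^ω: every basic cylinder
determined by a string of length `l` has measure `2⁻ˡ`. -/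
def IsFairCoin (μ : MeasureTheory.Measure (ℕ → Bool)) : Prop :=
  ∀ σ : List Bool, μ (Cyl σ) = (2 ^ σ.length : ENNReal)⁻¹

/-- A Schnorr test with respect to the measure `μ`: uniformly c.e. open sets with
uniformly computable measures bounded by `2^{-n}`. -/
def SchnorrTest (μ : MeasureTheory.Measure (ℕ → Bool)) (U : ℕ → Set (ℕ → Bool)) : Prop :=
  (∃ P : ℕ → Set (List Bool), UniformlyCE P ∧ ∀ n, U n = OpenFrom (P n)) ∧
  (∃ q : ℕ → ℕ → ℚ, Computable₂ q ∧
    ∀ n k, |(q n k : ℝ) - (μ (U n)).toReal| ≤ (2 : ℝ)⁻¹ ^ k) ∧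
  ∀ n, μ (U n) ≤ (2 ^ n : ENNReal)⁻¹

/-- A Schnorr random real (with respect to the fair-coin measure `μ`). -/
def SchnorrRandom (μ : MeasureTheory.Measure (ℕ → Bool)) (G : ℕ → Bool) : Prop :=
  ∀ U : ℕ → Set (ℕ → Bool), SchnorrTest μ U → G ∉ ⋂ n, U n

open Classical in
/-- The characteristic sequence of a set of naturals, as a point of 2^ω. -/
noncomputable def chiB (R : Set ℕ) : ℕ → Bool := fun n => decide (n ∈ R)

open Encodable Denumerable Nat.Partrec Nat.Partrec.Code

namespace MGaux

/-- The strictly increasing list enumerating the finset `Denumerable`-coded by `n`. -/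
def dF (n : ℕ) : List ℕ := Denumerable.raise' (Denumerable.ofNat (List ℕ) n) 0

theorem foldl_raise' (l : List ℕ) : ∀ (acc : List ℕ) (n : ℕ),
    (l.foldl (fun (p : List ℕ × ℕ) m => (p.1 ++ [m + p.2], m + p.2 + 1)) (acc, n)).1
      = acc ++ Denumerable.raise' l n := by
  induction l with
  | nil => simp [Denumerable.raise']
  | cons m l ih =>
    intro acc n
    simp only [List.foldl_cons, Denumerable.raise']
    rw [ih]
    simp

theorem primrec_dF : Primrec dF := by
  have h1 : Primrec (Denumerable.ofNat (List ℕ)) := Primrec.ofNat _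
  have hc : Primrec₂ fun (p : (List ℕ × ℕ)) (m : ℕ) =>
      ((p.1 ++ [m + p.2], m + p.2 + 1) : List ℕ × ℕ) := by
    have hsum : Primrec₂ fun (p : (List ℕ × ℕ)) (m : ℕ) => m + p.2 :=
      Primrec.nat_add.comp Primrec.snd (Primrec.snd.comp Primrec.fst)
    exact Primrec.pair
      (Primrec.list_concat.comp (Primrec.fst.comp Primrec.fst) hsum)
      (Primrec.succ.comp hsum)
  have h2 : Primrec fun n : ℕ =>
      ((Denumerable.ofNat (List ℕ) n).foldl
        (fun (p : List ℕ × ℕ) m => (p.1 ++ [m + p.2], m + p.2 + 1))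
        ((([] : List ℕ), 0) : List ℕ × ℕ)).1 :=
    Primrec.fst.comp <| Primrec.list_foldl h1 (Primrec.const _)
      (hc.comp (Primrec.fst.comp Primrec.snd) (Primrec.snd.comp Primrec.snd)).to₂
  exact h2.of_eq fun n => by rw [foldl_raise']; simp [dF]

theorem sorted_lt_dF (n : ℕ) : (dF n).Pairwise (· < ·) := (Denumerable.raise'_sorted _ _).pairwise

theorem val_ofNat (n : ℕ) : (Denumerable.ofNat (Finset ℕ) n).val = ↑(dF n) := by
  have h : Denumerable.ofNat (Finset ℕ) n =
      Finset.map (Denumerable.eqv ℕ).symm.toEmbedding (raise'Finset (ofNat (List ℕ) n) 0) := rfl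
  have h2 : ⇑(Denumerable.eqv ℕ).symm.toEmbedding = id := funext fun x => Denumerable.ofNat_nat x
  rw [h, Finset.map_val, h2, Multiset.map_id]
  rfl

theorem mem_dF {x n : ℕ} : x ∈ dF n ↔ x ∈ Denumerable.ofNat (Finset ℕ) n := by
  rw [← Finset.mem_val, val_ofNat]; simp

/-- `Finset.sort` is determined by the underlying multiset. -/
theorem sort_eq_of_sorted {l : List ℕ} (h : l.Pairwise (· < ·)) {s : Finset ℕ}
    (hs : s.val = ↑l) : s.sort (· ≤ ·) = l := by
  apply List.Perm.eq_of_pairwise' (r := (· ≤ ·)) (Finset.pairwise_sort _ _)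
    (h.imp le_of_lt)
  rw [← Multiset.coe_eq_coe, Finset.sort_eq, hs]

theorem sort_ofNat (n : ℕ) : (Denumerable.ofNat (Finset ℕ) n).sort (· ≤ ·) = dF n :=
  sort_eq_of_sorted (sorted_lt_dF n) (val_ofNat n)

/-- The `Finset.encodable` encoding equals the list encoding of the sorted list. -/
theorem encodeF_eq (a : Finset ℕ) :
    Encodable.encode a = Encodable.encode (a.sort (· ≤ ·)) := rfl

/-- The list of elements of a `Finset.encodable`-coded finset. -/
def aL (t : ℕ) : List ℕ := Denumerable.ofNat (List ℕ) t

theorem aL_encode (a : Finset ℕ) : aL (Encodable.encode a) = a.sort (· ≤ ·) := by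
  rw [encodeF_eq]
  exact Denumerable.ofNat_encode _

theorem mem_aL_encode {x : ℕ} {a : Finset ℕ} : x ∈ aL (Encodable.encode a) ↔ x ∈ a := by
  rw [aL_encode]; exact Finset.mem_sort _

theorem length_aL_encode (a : Finset ℕ) : (aL (Encodable.encode a)).length = a.card := by
  rw [aL_encode]; exact Finset.length_sort _

/-- From a strictly sorted list, the finset with that code. -/
theorem exists_finset_of_sorted {l : List ℕ} (h : l.Pairwise (· < ·)) :
    ∃ a : Finset ℕ, Encodable.encode a = Encodable.encode l ∧ a.val = ↑l := by
  refine ⟨⟨↑l, h.nodup⟩, ?_, rfl⟩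
  rw [encodeF_eq]
  congr 1
  exact sort_eq_of_sorted h rfl

/-- Encoding a finset, primrec-ly accessible from the `Denumerable`/`Primcodable` structure. -/
theorem primrec_encodeF : Primrec fun a : Finset ℕ => Encodable.encode a := by
  rw [Primrec.ofNat_iff (α := Finset ℕ)]
  have : Primrec fun n => Encodable.encode (dF n) := Primrec.encode.comp primrec_dF
  exact this.of_eq fun n => by rw [encodeF_eq, sort_ofNat]


def lany (l : List ℕ) (p : ℕ → Bool) : Bool := l.foldl (fun b x => b || p x) false

theorem foldl_or (p : ℕ → Bool) (l : List ℕ) : ∀ b, l.foldl (fun b x => b || p x) b = (b || l.any p) := by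
  induction l with
  | nil => simp
  | cons x l ih => intro b; simp [ih, Bool.or_assoc]

theorem lany_iff {l : List ℕ} {p : ℕ → Bool} : lany l p = true ↔ ∃ x ∈ l, p x = true := by
  rw [lany, foldl_or]; simp

def lall (l : List ℕ) (p : ℕ → Bool) : Bool := !(lany l fun x => !(p x))

theorem lall_iff {l : List ℕ} {p : ℕ → Bool} : lall l p = true ↔ ∀ x ∈ l, p x = true := by
  have h : lall l p = true ↔ ¬ (lany l (fun x => !(p x)) = true) := by simp [lall]
  rw [h, lany_iff]; push_neg; simp

theorem primrec_lany {α : Type} [Primcodable α] {f : α → List ℕ} {p : α → ℕ → Bool}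
    (hf : Primrec f) (hp : Primrec₂ p) : Primrec fun a => lany (f a) (p a) :=
  Primrec.list_foldl hf (Primrec.const false)
    (((Primrec.dom_bool₂ (· || ·)).comp (Primrec.fst.comp Primrec.snd)
      (hp.comp Primrec.fst (Primrec.snd.comp Primrec.snd))).to₂)

theorem primrec_lall {α : Type} [Primcodable α] {f : α → List ℕ} {p : α → ℕ → Bool}
    (hf : Primrec f) (hp : Primrec₂ p) : Primrec fun a => lall (f a) (p a) :=
  (Primrec.dom_bool (!·)).comp
    (primrec_lany hf (((Primrec.dom_bool (!·)).comp₂ hp)))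

theorem arithmetical_of_eq {S T : Set ℕ} (h : Arithmetical S) (e : S = T) : Arithmetical T := e ▸ h

/-- Every Π⁰₂ set (with computable matrix) is arithmetical. -/
theorem arith_pi2 {Q : ℕ → ℕ → ℕ → Bool}
    (hQ : Computable fun z : ℕ => Q z.unpair.1.unpair.1 z.unpair.1.unpair.2 z.unpair.2) :
    Arithmetical {m | ∀ u, ∃ s, Q m u s = true} := by
  have h2 : Arithmetical {z : ℕ | Q z.unpair.1.unpair.1 z.unpair.1.unpair.2 z.unpair.2 = true} :=
    Arithmetical.of_computable
      (ComputablePred.computable_iff.2 ⟨_, hQ, by funext z; simp⟩)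
  have h3 := (h2.proj).compl.proj.compl
  apply arithmetical_of_eq h3
  ext m
  simp only [Set.mem_setOf_eq, Nat.unpair_pair]
  push_neg
  constructor
  · intro h u
    rcases (h u) with ⟨s, hs⟩
    exact ⟨s, hs⟩
  · intro h u
    rcases h u with ⟨s, hs⟩
    exact ⟨s, hs⟩


/-! ### The step-evaluation matrices -/

def ev (e s x : ℕ) : Option ℕ := Nat.Partrec.Code.evaln s (Denumerable.ofNat Nat.Partrec.Code e) x

theorem primrec_ev : Primrec fun z : ℕ × ℕ × ℕ => ev z.1 z.2.1 z.2.2 := by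
  have h := Nat.Partrec.Code.primrec_evaln
  exact h.comp (Primrec.pair
    (Primrec.pair (Primrec.fst.comp Primrec.snd) ((Primrec.ofNat _).comp Primrec.fst))
    (Primrec.snd.comp Primrec.snd))

theorem ev_mono {e s s' x : ℕ} (h : s ≤ s') {k : ℕ} (hk : ev e s x = some k) :
    ev e s' x = some k :=
  Nat.Partrec.Code.evaln_mono h hk

theorem ev_sound {e s x k : ℕ} (hk : ev e s x = some k) :
    (Denumerable.ofNat Nat.Partrec.Code e).eval x = Part.some k :=
  Part.eq_some_iff.2 (Nat.Partrec.Code.evaln_sound hk)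

theorem ev_complete {e x k : ℕ} (hk : (Denumerable.ofNat Nat.Partrec.Code e).eval x = Part.some k) :
    ∃ s, x < s ∧ ev e s x = some k := by
  rcases Nat.Partrec.Code.evaln_complete.1 (Part.eq_some_iff.1 hk) with ⟨s, hs⟩
  exact ⟨s, Nat.Partrec.Code.evaln_bound hs, hs⟩

/-- Totality with values in `{0,1}`. -/
def Tot (e : ℕ) : Prop := ∀ x, (Denumerable.ofNat Nat.Partrec.Code e).eval x = Part.some 0 ∨
  (Denumerable.ofNat Nat.Partrec.Code e).eval x = Part.some 1

/-- The set computed by the (total, `{0,1}`-valued) code `e`. -/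
def evalA (e : ℕ) : Set ℕ := {x | (Denumerable.ofNat Nat.Partrec.Code e).eval x = Part.some 1}

def totB (e u s : ℕ) : Bool := decide (ev e s u = some 0) || decide (ev e s u = some 1)

def infB (e u s : ℕ) : Bool :=
  lany (List.range s) fun x => decide (u < x) && decide (ev e s x = some 1)

def ordB (e t u s : ℕ) : Bool :=
  !(decide (ev e s u = some 1)) || lall (aL t) fun x => decide (x < u)

def sortB (t : ℕ) : Bool :=
  lall (List.range ((aL t).length - 1)) fun j =>
    decide ((aL t).getD j 0 < (aL t).getD (j + 1) 0)

def baseB (m u s : ℕ) : Bool :=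
  sortB m.unpair.1 && totB m.unpair.2 u s && infB m.unpair.2 u s &&
    ordB m.unpair.2 m.unpair.1 u s

theorem sortB_iff {t : ℕ} : sortB t = true ↔ (aL t).Pairwise (· < ·) := by
  rw [sortB, lall_iff, ← List.isChain_iff_pairwise, List.isChain_iff_getElem]
  constructor
  · intro h i hi
    have := h i (List.mem_range.2 (by omega))
    simp only [decide_eq_true_eq] at this
    rwa [List.getD_eq_getElem _ _ (by omega), List.getD_eq_getElem _ _ (by omega)] at this
  · intro h j hj
    have hj' := List.mem_range.1 hj
    have := h j (by omega)
    simp only [decide_eq_true_eq]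
    rwa [List.getD_eq_getElem _ _ (by omega), List.getD_eq_getElem _ _ (by omega)]

/-- If the base matrix is satisfiable for every `u`, the code is total and `{0,1}`-valued,
computes an infinite set, and respects the order constraint. -/
theorem base_sound {m : ℕ} (h : ∀ u, ∃ s, baseB m u s = true) :
    (aL m.unpair.1).Pairwise (· < ·) ∧ Tot m.unpair.2 ∧ (evalA m.unpair.2).Infinite ∧
      (∀ x ∈ aL m.unpair.1, ∀ y ∈ evalA m.unpair.2, x < y) := by
  have hs : ∀ u, ∃ s, sortB m.unpair.1 = true ∧ totB m.unpair.2 u s = true ∧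
      infB m.unpair.2 u s = true ∧ ordB m.unpair.2 m.unpair.1 u s = true := by
    intro u
    rcases h u with ⟨s, hsb⟩
    simp only [baseB, Bool.and_eq_true] at hsb
    exact ⟨s, hsb.1.1.1, hsb.1.1.2, hsb.1.2, hsb.2⟩
  have hsort : (aL m.unpair.1).Pairwise (· < ·) := sortB_iff.1 (hs 0).choose_spec.1
  have htot : Tot m.unpair.2 := by
    intro x
    rcases hs x with ⟨s, _, ht, _, _⟩
    simp only [totB, Bool.or_eq_true, decide_eq_true_eq] at ht
    rcases ht with ht | ht
    · exact Or.inl (ev_sound ht)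
    · exact Or.inr (ev_sound ht)
  have hinf : (evalA m.unpair.2).Infinite := by
    apply Set.infinite_of_forall_exists_gt
    intro u
    rcases hs u with ⟨s, _, _, hi, _⟩
    rw [infB, lany_iff] at hi
    rcases hi with ⟨x, _, hx⟩
    simp only [Bool.and_eq_true, decide_eq_true_eq] at hx
    exact ⟨x, ev_sound hx.2, hx.1⟩
  refine ⟨hsort, htot, hinf, ?_⟩
  intro x hx y hy
  rcases hs y with ⟨s, _, ht, _, ho⟩
  simp only [totB, Bool.or_eq_true, decide_eq_true_eq] at ht
  rcases ht with ht | ht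
  · exfalso
    have := ev_sound ht
    rw [hy] at this
    exact absurd (Part.some_inj.mp this) one_ne_zero
  · rw [ordB, ht] at ho
    simp only [decide_true, Bool.not_true, Bool.false_or, lall_iff] at ho
    have := ho x hx
    simpa using this

/-- Conversely, the base matrix eventually holds, given the semantic facts. -/
theorem base_complete {m : ℕ} (hsort : (aL m.unpair.1).Pairwise (· < ·))
    (htot : Tot m.unpair.2) (hinf : (evalA m.unpair.2).Infinite)
    (hord : ∀ x ∈ aL m.unpair.1, ∀ y ∈ evalA m.unpair.2, x < y) :
    ∀ u, ∃ s₀, ∀ s, s₀ ≤ s → baseB m u s = true := by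
  intro u
  -- a stage for totality at u
  have h1 : ∃ k s₁, ev m.unpair.2 s₁ u = some k ∧ k ≤ 1 := by
    rcases htot u with h | h
    · rcases ev_complete h with ⟨s, _, hs⟩; exact ⟨0, s, hs, by norm_num⟩
    · rcases ev_complete h with ⟨s, _, hs⟩; exact ⟨1, s, hs, le_refl 1⟩
  rcases h1 with ⟨k, s₁, hk, hk1⟩
  rcases hinf.exists_gt u with ⟨x, hxA, hux⟩
  rcases ev_complete hxA with ⟨s₂, hxs₂, hs₂⟩
  refine ⟨max s₁ s₂, fun s hs => ?_⟩
  have hks : ev m.unpair.2 s u = some k := ev_mono (le_trans (le_max_left _ _) hs) hk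
  have hxs : ev m.unpair.2 s x = some 1 := ev_mono (le_trans (le_max_right _ _) hs) hs₂
  have hxlt : x < s := lt_of_lt_of_le hxs₂ (le_trans (le_max_right _ _) hs)
  rw [baseB]
  simp only [Bool.and_eq_true]
  refine ⟨⟨⟨sortB_iff.2 hsort, ?_⟩, ?_⟩, ?_⟩
  · rw [totB]
    interval_cases k
    · simp [hks]
    · simp [hks]
  · rw [infB, lany_iff]
    exact ⟨x, List.mem_range.2 hxlt, by simp [hux, hxs]⟩
  · rw [ordB]
    rcases eq_or_ne k 1 with rfl | hne
    · have huA : u ∈ evalA m.unpair.2 := ev_sound hks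
      simp only [hks, decide_true, Bool.not_true, Bool.false_or, lall_iff]
      intro y hy
      simpa using hord y hy u huA
    · have : decide (ev m.unpair.2 s u = some 1) = false := by
        simp only [decide_eq_false_iff_not]
        rw [hks]
        simp [hne]
      rw [this]
      simp



/-! ### Constructing conditions from codes -/

theorem computablePred_evalA {e : ℕ} (h : Tot e) : ComputablePred (· ∈ evalA e) := by
  have hdom : ∀ x, ((Denumerable.ofNat Nat.Partrec.Code e).eval x).Dom := by
    intro x
    rcases h x with h' | h' <;> rw [h'] <;> trivial
  have hpart : Partrec ((Denumerable.ofNat Nat.Partrec.Code e).eval) :=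
    Nat.Partrec.Code.eval_part.comp (Computable.const _) Computable.id
  have hg : Computable fun x => ((Denumerable.ofNat Nat.Partrec.Code e).eval x).get (hdom x) :=
    hpart.of_eq fun x => (Part.some_get _).symm
  apply ComputablePred.computable_iff.2
  refine ⟨fun x => decide (((Denumerable.ofNat Nat.Partrec.Code e).eval x).get (hdom x) = 1),
    ((Primrec.eq.comp Primrec.id (Primrec.const 1)).decide.to_comp).comp hg, ?_⟩
  funext x
  apply propext
  simp only [decide_eq_true_eq]
  rw [Part.get_eq_iff_eq_some]
  exact Iff.rfl

theorem base_construct {m : ℕ} (h : ∀ u, ∃ s, baseB m u s = true) :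
    ∃ c : MathiasCond, CondCode m c ∧ c.A = evalA m.unpair.2 ∧
      ∀ x, (x ∈ c.a ↔ x ∈ aL m.unpair.1) := by
  obtain ⟨hsort, htot, hinf, hord⟩ := base_sound h
  obtain ⟨a, ha_enc, ha_val⟩ := exists_finset_of_sorted hsort
  have hmem : ∀ x, (x ∈ a ↔ x ∈ aL m.unpair.1) := by
    intro x
    rw [← Finset.mem_val, ha_val]
    simp
  refine ⟨⟨a, evalA m.unpair.2, hinf, computablePred_evalA htot, ?_⟩, ⟨?_, ?_⟩, rfl, hmem⟩
  · intro x hx y hy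
    exact hord x ((hmem x).1 hx) y hy
  · rw [ha_enc]
    exact (Denumerable.encode_ofNat _).symm
  · intro x
    by_cases hx : x ∈ evalA m.unpair.2
    · rw [if_pos hx]
      exact hx
    · rw [if_neg hx]
      rcases htot x with h' | h'
      · exact h'
      · exact absurd h' hx

theorem decode_facts {m : ℕ} {c : MathiasCond} (hc : CondCode m c) :
    aL m.unpair.1 = c.a.sort (· ≤ ·) ∧ evalA m.unpair.2 = c.A ∧ Tot m.unpair.2 ∧
      (∀ u, ∃ s₀, ∀ s, s₀ ≤ s → baseB m u s = true) := by
  obtain ⟨h1, h2⟩ := hc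
  have haL : aL m.unpair.1 = c.a.sort (· ≤ ·) := by rw [h1, aL_encode]
  have hA : evalA m.unpair.2 = c.A := by
    ext x
    simp only [evalA, Set.mem_setOf_eq]
    rw [h2 x]
    by_cases hx : x ∈ c.A
    · simp [hx]
    · simp only [hx, if_false, iff_false]
      intro hcontra
      exact one_ne_zero (Part.some_inj.mp hcontra).symm
  have htot : Tot m.unpair.2 := by
    intro x
    rw [h2 x]
    by_cases hx : x ∈ c.A
    · right; rw [if_pos hx]
    · left; rw [if_neg hx]
  refine ⟨haL, hA, htot, ?_⟩
  apply base_complete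
  · rw [haL]; exact (Finset.sortedLT_sort c.a).pairwise
  · exact htot
  · rw [hA]; exact c.infinite
  · intro x hx y hy
    rw [haL, Finset.mem_sort] at hx
    rw [hA] at hy
    exact c.lt x hx y hy

/-! ### Primrec plumbing for the matrices -/

theorem primrec_aL : Primrec aL := Primrec.ofNat _

theorem primrec_triple : Primrec fun z : ℕ =>
    ((z.unpair.1.unpair.1, z.unpair.1.unpair.2, z.unpair.2) : ℕ × ℕ × ℕ) := by
  have h1 : Primrec fun z : ℕ => z.unpair.1 := Primrec.fst.comp Primrec.unpair
  have h2 : Primrec fun z : ℕ => z.unpair.1.unpair := Primrec.unpair.comp h1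
  exact (Primrec.fst.comp h2).pair ((Primrec.snd.comp h2).pair (Primrec.snd.comp Primrec.unpair))

theorem primrec_totB : Primrec fun z : ℕ × ℕ × ℕ => totB z.1 z.2.1 z.2.2 := by
  have hev : Primrec fun z : ℕ × ℕ × ℕ => ev z.1 z.2.2 z.2.1 :=
    primrec_ev.comp (Primrec.fst.pair ((Primrec.snd.comp Primrec.snd).pair
      (Primrec.fst.comp Primrec.snd)))
  exact (Primrec.dom_bool₂ (· || ·)).comp
    (Primrec.eq.comp hev (Primrec.const (some 0))).decide
    (Primrec.eq.comp hev (Primrec.const (some 1))).decide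

theorem primrec_infB : Primrec fun z : ℕ × ℕ × ℕ => infB z.1 z.2.1 z.2.2 := by
  apply primrec_lany (Primrec.list_range.comp (Primrec.snd.comp Primrec.snd))
  have hev : Primrec fun w : (ℕ × ℕ × ℕ) × ℕ => ev w.1.1 w.1.2.2 w.2 :=
    primrec_ev.comp ((Primrec.fst.comp Primrec.fst).pair
      (((Primrec.snd.comp (Primrec.snd.comp Primrec.fst))).pair Primrec.snd))
  exact ((Primrec.dom_bool₂ (· && ·)).comp
    (Primrec.nat_lt.comp (Primrec.fst.comp (Primrec.snd.comp Primrec.fst)) Primrec.snd).decide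
    (Primrec.eq.comp hev (Primrec.const (some 1))).decide).to₂

theorem primrec_ordB' : Primrec fun z : ℕ × ℕ × ℕ × ℕ => ordB z.1 z.2.1 z.2.2.1 z.2.2.2 := by
  have hev : Primrec fun z : ℕ × ℕ × ℕ × ℕ => ev z.1 z.2.2.2 z.2.2.1 :=
    primrec_ev.comp (Primrec.fst.pair
      (((Primrec.snd.comp (Primrec.snd.comp Primrec.snd))).pair
        (Primrec.fst.comp (Primrec.snd.comp Primrec.snd))))
  apply (Primrec.dom_bool₂ (· || ·)).comp
  · exact (Primrec.dom_bool (!·)).comp (Primrec.eq.comp hev (Primrec.const (some 1))).decide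
  · apply primrec_lall (primrec_aL.comp (Primrec.fst.comp Primrec.snd))
    exact (Primrec.nat_lt.comp Primrec.snd
      (Primrec.fst.comp (Primrec.snd.comp (Primrec.snd.comp Primrec.fst)))).decide.to₂

theorem primrec_sortB : Primrec sortB := by
  have hlen : Primrec fun t : ℕ => (aL t).length := Primrec.list_length.comp primrec_aL
  apply primrec_lall (Primrec.list_range.comp (Primrec.nat_sub.comp hlen (Primrec.const 1)))
  have hget : Primrec₂ fun (t : ℕ) (j : ℕ) => (aL t).getD j 0 :=
    ((Primrec.list_getD 0).comp (primrec_aL.comp Primrec.fst) Primrec.snd).to₂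
  exact (Primrec.nat_lt.comp (hget.comp Primrec.fst Primrec.snd)
    (hget.comp Primrec.fst (Primrec.succ.comp Primrec.snd))).decide.to₂

theorem primrec_baseB : Primrec fun z : ℕ × ℕ × ℕ => baseB z.1 z.2.1 z.2.2 := by
  have hu1 : Primrec fun z : ℕ × ℕ × ℕ => z.1.unpair.1 :=
    Primrec.fst.comp (Primrec.unpair.comp Primrec.fst)
  have hu2 : Primrec fun z : ℕ × ℕ × ℕ => z.1.unpair.2 :=
    Primrec.snd.comp (Primrec.unpair.comp Primrec.fst)
  have hb2 := Primrec.dom_bool₂ (· && ·)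
  apply hb2.comp
  apply hb2.comp
  apply hb2.comp
  · exact primrec_sortB.comp hu1
  · exact primrec_totB.comp (hu2.pair Primrec.snd)
  · exact primrec_infB.comp (hu2.pair Primrec.snd)
  · exact primrec_ordB'.comp (hu2.pair (hu1.pair Primrec.snd))

/-! ### The family making the generic unbounded -/

def XI (n : ℕ) : Set MathiasCond := {c | ∃ x ∈ c.a, n < x}

def exgtB (n t : ℕ) : Bool := lany (aL t) fun x => decide (n < x)

theorem primrec_exgtB : Primrec₂ exgtB := by
  apply primrec_lany (primrec_aL.comp Primrec.snd)
  exact (Primrec.nat_lt.comp (Primrec.fst.comp Primrec.fst) Primrec.snd).decide.to₂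

theorem XI_codes (n : ℕ) :
    CodesOf (XI n) = {m | ∀ u, ∃ s, (baseB m u s && exgtB n m.unpair.1) = true} := by
  ext m
  simp only [CodesOf, Set.mem_setOf_eq]
  constructor
  · rintro ⟨c, hcX, hcc⟩
    obtain ⟨haL, hA, htot, hbase⟩ := decode_facts hcc
    intro u
    rcases hbase u with ⟨s₀, hs₀⟩
    refine ⟨s₀, ?_⟩
    rw [Bool.and_eq_true]
    refine ⟨hs₀ s₀ le_rfl, ?_⟩
    rw [exgtB, lany_iff]
    rcases hcX with ⟨x, hxa, hnx⟩
    exact ⟨x, by rw [haL]; exact (Finset.mem_sort _).2 hxa, by simp [hnx]⟩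
  · intro h
    have hbase : ∀ u, ∃ s, baseB m u s = true := fun u =>
      (h u).imp fun s hs => by
        rw [Bool.and_eq_true] at hs
        exact hs.1
    obtain ⟨c, hcc, _, hca⟩ := base_construct hbase
    refine ⟨c, ?_, hcc⟩
    obtain ⟨s, hs⟩ := h 0
    rw [Bool.and_eq_true] at hs
    have hex := hs.2
    rw [exgtB, lany_iff] at hex
    rcases hex with ⟨x, hx, hnx⟩
    exact ⟨x, (hca x).2 hx, by simpa using hnx⟩

theorem XI_arith (n : ℕ) : Arithmetical (CodesOf (XI n)) := by
  rw [XI_codes]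
  apply arith_pi2 (Q := fun m u s => baseB m u s && exgtB n m.unpair.1)
  have h1 : Primrec fun z : ℕ × ℕ × ℕ => exgtB n z.1.unpair.1 :=
    primrec_exgtB.comp (Primrec.const n)
      (Primrec.fst.comp (Primrec.unpair.comp Primrec.fst))
  exact (((Primrec.dom_bool₂ (· && ·)).comp primrec_baseB h1).comp primrec_triple).to_comp

theorem XI_dense (n : ℕ) : MathiasDense (XI n) := by
  intro c
  rcases c.infinite.exists_gt n with ⟨x, hxA, hnx⟩
  have hcomp : ComputablePred (· ∈ {y | y ∈ c.A ∧ x < y}) := by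
    obtain ⟨f, hf, hfeq⟩ := ComputablePred.computable_iff.1 c.comp
    apply ComputablePred.computable_iff.2
    refine ⟨fun y => f y && decide (x < y),
      (Primrec.dom_bool₂ (· && ·)).to_comp.comp hf
        (Primrec.nat_lt.comp (Primrec.const x) Primrec.id).decide.to_comp, ?_⟩
    funext y
    apply propext
    simp only [Set.mem_setOf_eq, Bool.and_eq_true, decide_eq_true_eq]
    have hy := congrFun hfeq y
    constructor
    · rintro ⟨h1, h2⟩
      exact ⟨by rw [← hy]; exact h1, h2⟩
    · rintro ⟨h1, h2⟩
      exact ⟨by rw [← hy] at h1; exact h1, h2⟩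
  have hinf : ({y | y ∈ c.A ∧ x < y} : Set ℕ).Infinite := by
    apply Set.Infinite.mono (s := c.A \ {y | y ≤ x})
    · intro y hy
      exact ⟨hy.1, by simpa using hy.2⟩
    · exact c.infinite.diff (Set.finite_le_nat x)
  refine ⟨⟨insert x c.a, {y | y ∈ c.A ∧ x < y}, hinf, hcomp, ?_⟩,
    ⟨x, Finset.mem_insert_self _ _, hnx⟩, ?_, ?_, ?_⟩
  · intro p hp y hy
    rcases Finset.mem_insert.1 hp with rfl | hp'
    · exact hy.2
    · exact c.lt p hp' y hy.1
  · exact Finset.subset_insert _ _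
  · intro y hy
    simp only [Finset.coe_insert, Set.mem_diff, Set.mem_insert_iff, Finset.mem_coe] at hy
    rcases hy.1 with rfl | h'
    · exact hxA
    · exact absurd h' hy.2
  · exact fun y hy => hy.1

theorem generic_infinite {R : Set ℕ} (hR : MathiasGeneric R) : R.Infinite := by
  apply Set.infinite_of_forall_exists_gt
  intro n
  rcases hR (XI n) (XI_arith n) (XI_dense n) with ⟨c, hcX, hmem⟩
  rcases hcX with ⟨x, hxa, hnx⟩
  exact ⟨x, hmem.1 hxa, hnx⟩


/-! ### Computability of `Nat.find` -/

theorem computable_nat_find {p : ℕ → ℕ → Bool} (hp : Computable₂ p)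
    (H : ∀ a, ∃ n, p a n = true) : Computable fun a => Nat.find (H a) := by
  have hp' : Partrec₂ fun (a n : ℕ) => (Part.some (p a n) : Part Bool) := hp
  have h := Partrec.rfind hp'
  apply h.of_eq
  intro a
  apply Part.eq_some_iff.2
  apply Nat.mem_rfind.2
  constructor
  · simpa [Part.mem_some_iff] using (Nat.find_spec (H a)).symm
  · intro m hm
    have := Nat.find_min (H a) hm
    simp only [Part.mem_some_iff]
    exact (Bool.not_eq_true _ ▸ this : p a m = false).symm

/-! ### The canonical-immunity family -/

def lmax (l : List ℕ) : ℕ := l.foldl max 0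

theorem foldl_max_le (l : List ℕ) : ∀ b, b ≤ l.foldl max b ∧ ∀ x ∈ l, x ≤ l.foldl max b := by
  induction l with
  | nil => simp
  | cons y l ih =>
    intro b
    constructor
    · exact le_trans (le_max_left b y) (ih (max b y)).1
    · intro x hx
      rcases List.mem_cons.1 hx with rfl | hx'
      · exact le_trans (le_max_right b x) (ih (max b x)).1
      · exact (ih (max b y)).2 x hx'

theorem le_lmax {l : List ℕ} {x : ℕ} (hx : x ∈ l) : x ≤ lmax l := (foldl_max_le l 0).2 x hx

theorem primrec_lmax : Primrec lmax :=
  Primrec.list_foldl Primrec.id (Primrec.const 0)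
    ((Primrec.nat_max.comp (Primrec.fst.comp Primrec.snd) (Primrec.snd.comp Primrec.snd)).to₂)

/-- The canonical-immunity family of conditions for the numbering `D`. -/
def XD (D : ℕ → Finset ℕ) : Set MathiasCond :=
  {c | ∀ i, ↑(D i) ⊆ ↑c.a ∪ c.A → (↑(D i) : Set ℕ) ⊆ ↑c.a ∨ (D i).card ≤ i}

/-- The extra matrix for the family `XD`; `d` stands for `encode (D u)`. -/
def dchkB (d t e u s : ℕ) : Bool :=
  decide ((aL d).length ≤ u) ||
  lall (aL d) (fun x => lany (aL t) (fun y => decide (y = x))) ||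
  lany (List.range s) (fun x =>
    lany (aL d) (fun y => decide (y = x)) &&
    !(lany (aL t) (fun y => decide (y = x))) &&
    decide (ev e s x = some 0))

set_option maxHeartbeats 1000000 in
theorem primrec_dchkB : Primrec fun w : ℕ × ℕ × ℕ × ℕ =>
    dchkB w.1 w.2.1.unpair.1 w.2.1.unpair.2 w.2.2.1 w.2.2.2 := by
  have pd : Primrec fun w : ℕ × ℕ × ℕ × ℕ => w.1 := Primrec.fst
  have pm : Primrec fun w : ℕ × ℕ × ℕ × ℕ => w.2.1 := Primrec.fst.comp Primrec.snd
  have pt : Primrec fun w : ℕ × ℕ × ℕ × ℕ => w.2.1.unpair.1 :=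
    Primrec.fst.comp (Primrec.unpair.comp pm)
  have pe : Primrec fun w : ℕ × ℕ × ℕ × ℕ => w.2.1.unpair.2 :=
    Primrec.snd.comp (Primrec.unpair.comp pm)
  have pu : Primrec fun w : ℕ × ℕ × ℕ × ℕ => w.2.2.1 :=
    Primrec.fst.comp (Primrec.snd.comp Primrec.snd)
  have ps : Primrec fun w : ℕ × ℕ × ℕ × ℕ => w.2.2.2 :=
    Primrec.snd.comp (Primrec.snd.comp Primrec.snd)
  have hmem : ∀ (f : (ℕ × ℕ × ℕ × ℕ) × ℕ → ℕ), Primrec f →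
      Primrec fun b : (ℕ × ℕ × ℕ × ℕ) × ℕ => lany (aL (f b)) (fun y => decide (y = b.2)) := by
    intro f hf
    exact primrec_lany (primrec_aL.comp hf)
      ((Primrec.eq.comp Primrec.snd (Primrec.snd.comp Primrec.fst)).decide.to₂)
  have hb2 := Primrec.dom_bool₂ (· || ·)
  apply hb2.comp
  apply hb2.comp
  · exact (Primrec.nat_le.comp (Primrec.list_length.comp (primrec_aL.comp pd)) pu).decide
  · apply primrec_lall (primrec_aL.comp pd)
    exact (hmem _ (pt.comp Primrec.fst)).to₂
  · apply primrec_lany (Primrec.list_range.comp ps)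
    have h1 := hmem _ (pd.comp Primrec.fst)
    have h2 := hmem _ (pt.comp Primrec.fst)
    have h3 : Primrec fun w : (ℕ × ℕ × ℕ × ℕ) × ℕ => ev w.1.2.1.unpair.2 w.1.2.2.2 w.2 :=
      primrec_ev.comp (((pe.comp Primrec.fst)).pair (((ps.comp Primrec.fst)).pair Primrec.snd))
    have h4 : Primrec fun w : (ℕ × ℕ × ℕ × ℕ) × ℕ =>
        decide (ev w.1.2.1.unpair.2 w.1.2.2.2 w.2 = some 0) :=
      (Primrec.eq.comp h3 (Primrec.const (some 0))).decide
    exact ((Primrec.dom_bool₂ (· && ·)).comp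
      ((Primrec.dom_bool₂ (· && ·)).comp h1 ((Primrec.dom_bool (!·)).comp h2)) h4).to₂

set_option maxHeartbeats 1000000 in
theorem XD_codes {D : ℕ → Finset ℕ} :
    CodesOf (XD D) = {m | ∀ u, ∃ s,
      (baseB m u s && dchkB (Encodable.encode (D u)) m.unpair.1 m.unpair.2 u s) = true} := by
  ext m
  simp only [CodesOf, Set.mem_setOf_eq]
  constructor
  · rintro ⟨c, hcX, hcc⟩
    obtain ⟨haL, hA, htot, hbase⟩ := decode_facts hcc
    intro u
    rcases hbase u with ⟨s₀, hs₀⟩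
    by_cases hsub : (↑(D u) : Set ℕ) ⊆ ↑c.a ∪ c.A
    · refine ⟨s₀, ?_⟩
      rw [Bool.and_eq_true]
      refine ⟨hs₀ s₀ le_rfl, ?_⟩
      rw [dchkB]
      rw [Bool.or_eq_true, Bool.or_eq_true]
      rcases hcX u hsub with h | h
      · apply Or.inl; apply Or.inr
        rw [lall_iff]
        intro x hx
        rw [lany_iff]
        have hxa : x ∈ c.a := h (mem_aL_encode.1 hx)
        exact ⟨x, by rw [haL]; exact (Finset.mem_sort _).2 hxa, by simp⟩
      · apply Or.inl; apply Or.inl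
        simp only [decide_eq_true_eq]
        rw [length_aL_encode]
        exact h
    · rw [Set.not_subset] at hsub
      rcases hsub with ⟨x, hxD, hxn⟩
      simp only [Set.mem_union, not_or] at hxn
      have hx0 : (Denumerable.ofNat Nat.Partrec.Code m.unpair.2).eval x = Part.some 0 := by
        rcases htot x with h' | h'
        · exact h'
        · exfalso
          apply hxn.2
          rw [← hA]
          exact h'
      rcases ev_complete hx0 with ⟨s₂, hxs₂, hevx⟩
      refine ⟨max s₀ s₂, ?_⟩
      rw [Bool.and_eq_true]
      refine ⟨hs₀ _ (le_max_left _ _), ?_⟩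
      rw [dchkB, Bool.or_eq_true]
      apply Or.inr
      rw [lany_iff]
      refine ⟨x, List.mem_range.2 (lt_of_lt_of_le hxs₂ (le_max_right _ _)), ?_⟩
      simp only [Bool.and_eq_true, decide_eq_true_eq]
      refine ⟨⟨?_, ?_⟩, ev_mono (le_max_right _ _) hevx⟩
      · rw [lany_iff]
        exact ⟨x, mem_aL_encode.2 (by exact_mod_cast hxD), by simp⟩
      · have hno : lany (aL m.unpair.1) (fun y => decide (y = x)) = false := by
          cases hcase : lany (aL m.unpair.1) (fun y => decide (y = x)) with
          | false => rfl
          | true =>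
            exfalso
            rcases lany_iff.1 hcase with ⟨y, hy, hdec⟩
            simp only [decide_eq_true_eq] at hdec
            subst hdec
            apply hxn.1
            rw [haL, Finset.mem_sort] at hy
            exact_mod_cast hy
        rw [hno]
        rfl
  · intro h
    have hbase : ∀ u, ∃ s, baseB m u s = true := fun u =>
      (h u).imp fun s hs => by
        rw [Bool.and_eq_true] at hs
        exact hs.1
    obtain ⟨c, hcc, hcA, hca⟩ := base_construct hbase
    refine ⟨c, ?_, hcc⟩
    intro i hsub
    rcases h i with ⟨s, hs⟩
    rw [Bool.and_eq_true] at hs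
    have hd := hs.2
    rw [dchkB, Bool.or_eq_true, Bool.or_eq_true] at hd
    rcases hd with (hd | hd) | hd
    · right
      simp only [decide_eq_true_eq] at hd
      rwa [length_aL_encode] at hd
    · left
      intro x hx
      have hx' : x ∈ aL (Encodable.encode (D i)) := mem_aL_encode.2 (by exact_mod_cast hx)
      rw [lall_iff] at hd
      have := hd x hx'
      rw [lany_iff] at this
      rcases this with ⟨y, hy, hyx⟩
      simp only [decide_eq_true_eq] at hyx
      subst hyx
      exact Finset.mem_coe.2 ((hca y).2 hy)
    · exfalso
      rw [lany_iff] at hd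
      rcases hd with ⟨x, _, hx⟩
      simp only [Bool.and_eq_true, decide_eq_true_eq] at hx
      obtain ⟨⟨hxd, hxt⟩, hx0⟩ := hx
      rw [lany_iff] at hxd
      rcases hxd with ⟨y, hy, hyx⟩
      simp only [decide_eq_true_eq] at hyx
      subst hyx
      have hyD : y ∈ D i := mem_aL_encode.1 hy
      have hya : y ∉ c.a := by
        intro hcon
        have : lany (aL m.unpair.1) (fun z => decide (z = y)) = true := by
          rw [lany_iff]
          exact ⟨y, (hca y).1 hcon, by simp⟩
        rw [this] at hxt
        simp at hxt
      have hyA : y ∈ c.A := by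
        rcases hsub (Finset.mem_coe.2 hyD) with h' | h'
        · exact absurd (Finset.mem_coe.1 h') hya
        · exact h'
      have h1 : (Denumerable.ofNat Nat.Partrec.Code m.unpair.2).eval y = Part.some 1 := by
        rw [hcA] at hyA
        exact hyA
      have h0 := ev_sound hx0
      rw [h1] at h0
      exact one_ne_zero (Part.some_inj.mp h0)

set_option maxHeartbeats 10000000 in
theorem XD_arith {D : ℕ → Finset ℕ} (hD : Computable D) : Arithmetical (CodesOf (XD D)) := by
  rw [XD_codes]
  apply arith_pi2 (Q := fun m u s =>
    baseB m u s && dchkB (Encodable.encode (D u)) m.unpair.1 m.unpair.2 u s)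
  have hu1 : Primrec fun z : ℕ => z.unpair.1.unpair.1 :=
    Primrec.fst.comp (Primrec.unpair.comp (Primrec.fst.comp Primrec.unpair))
  have hu2 : Primrec fun z : ℕ => z.unpair.1.unpair.2 :=
    Primrec.snd.comp (Primrec.unpair.comp (Primrec.fst.comp Primrec.unpair))
  have hu3 : Primrec fun z : ℕ => z.unpair.2 := Primrec.snd.comp Primrec.unpair
  have hDu : Computable fun z : ℕ => Encodable.encode (D (z.unpair.1.unpair.2)) :=
    (primrec_encodeF.to_comp).comp (hD.comp hu2.to_comp)
  have hwd : Computable fun z : ℕ =>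
      ((Encodable.encode (D (z.unpair.1.unpair.2)), z.unpair.1.unpair.1,
        z.unpair.1.unpair.2, z.unpair.2) : ℕ × ℕ × ℕ × ℕ) :=
    hDu.pair (hu1.to_comp.pair (hu2.to_comp.pair hu3.to_comp))
  have h1 : Computable fun z : ℕ =>
      dchkB (Encodable.encode (D (z.unpair.1.unpair.2))) z.unpair.1.unpair.1.unpair.1
        z.unpair.1.unpair.1.unpair.2 z.unpair.1.unpair.2 z.unpair.2 :=
    (primrec_dchkB.to_comp).comp hwd
  have h0 : Computable fun z : ℕ =>
      baseB z.unpair.1.unpair.1 z.unpair.1.unpair.2 z.unpair.2 :=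
    ((primrec_baseB.comp primrec_triple)).to_comp
  exact ((Primrec.dom_bool₂ (· && ·)).to_comp).comp h0 h1


/-! ### Density of the canonical-immunity family -/

def nextFn (fA : ℕ → Bool) (H : ∀ t, ∃ x, (fA x && decide (t < x)) = true) : ℕ → ℕ :=
  fun t => Nat.find (H t)

def BFn (mD : ℕ → ℕ) : ℕ → ℕ := fun k => Nat.rec (mD 0) (fun y IH => max IH (mD (y + 1))) k

def gFn (fA : ℕ → Bool) (mD : ℕ → ℕ) (H : ∀ t, ∃ x, (fA x && decide (t < x)) = true)
    (a0 : ℕ) : ℕ → ℕ :=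
  fun k => Nat.rec (nextFn fA H (BFn mD a0))
    (fun y IH => nextFn fA H (max IH (BFn mD (a0 + y + 1)))) k

def memB (g : ℕ → ℕ) (x : ℕ) : Bool := Nat.rec false (fun y IH => IH || decide (g y = x)) (x + 1)

theorem computable_nextFn {fA : ℕ → Bool} (hfA : Computable fA)
    (H : ∀ t, ∃ x, (fA x && decide (t < x)) = true) : Computable (nextFn fA H) := by
  apply computable_nat_find
  exact ((Primrec.dom_bool₂ (· && ·)).to_comp).comp (hfA.comp Computable.snd)
    ((Primrec.nat_lt.comp Primrec.fst Primrec.snd).decide.to_comp)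

theorem computable_BFn {mD : ℕ → ℕ} (hmD : Computable mD) : Computable (BFn mD) := by
  have h := Computable.nat_rec (f := fun k : ℕ => k) (g := fun _ : ℕ => mD 0)
    (h := fun (_ : ℕ) (p : ℕ × ℕ) => max p.2 (mD (p.1 + 1))) Computable.id
    (Computable.const (mD 0))
    (((Primrec.nat_max.to_comp).comp (Computable.snd.comp Computable.snd)
      (hmD.comp ((Primrec.succ.comp (Primrec.fst.comp Primrec.snd)).to_comp))).to₂)
  exact h.of_eq fun k => rfl

theorem computable_gFn {fA : ℕ → Bool} {mD : ℕ → ℕ} (hfA : Computable fA) (hmD : Computable mD)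
    (H : ∀ t, ∃ x, (fA x && decide (t < x)) = true) (a0 : ℕ) :
    Computable (gFn fA mD H a0) := by
  have h := Computable.nat_rec (f := fun k : ℕ => k)
    (g := fun _ : ℕ => nextFn fA H (BFn mD a0))
    (h := fun (_ : ℕ) (p : ℕ × ℕ) => nextFn fA H (max p.2 (BFn mD (a0 + p.1 + 1))))
    Computable.id (Computable.const _)
    (((computable_nextFn hfA H).comp
      ((Primrec.nat_max.to_comp).comp (Computable.snd.comp Computable.snd)
        ((computable_BFn hmD).comp
          ((Primrec.succ.comp (Primrec.nat_add.comp (Primrec.const a0)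
            (Primrec.fst.comp Primrec.snd))).to_comp)))).to₂)
  exact h.of_eq fun k => rfl

theorem computable_memB {g : ℕ → ℕ} (hg : Computable g) : Computable (memB g) := by
  have h := Computable.nat_rec (f := fun x : ℕ => x + 1) (g := fun _ : ℕ => false)
    (h := fun (x : ℕ) (p : ℕ × Bool) => p.2 || decide (g p.1 = x))
    (Primrec.succ.to_comp) (Computable.const false)
    ((((Primrec.dom_bool₂ (· || ·)).to_comp).comp (Computable.snd.comp Computable.snd)
      (((Primrec.eq (α := ℕ)).decide.to_comp).comp (hg.comp (Computable.fst.comp Computable.snd))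
        Computable.fst)).to₂)
  exact h.of_eq fun x => rfl

theorem memB_rec_iff (g : ℕ → ℕ) (x : ℕ) :
    ∀ n, (Nat.rec false (fun y IH => IH || decide (g y = x)) n : Bool) = true ↔ ∃ k < n, g k = x := by
  intro n
  induction n with
  | zero => simp
  | succ n ih =>
    show (_ || _) = true ↔ _
    rw [Bool.or_eq_true, ih]
    constructor
    · rintro (⟨k, hk, hgk⟩ | h)
      · exact ⟨k, by omega, hgk⟩
      · exact ⟨n, by omega, by simpa using h⟩
    · rintro ⟨k, hk, hgk⟩
      rcases Nat.lt_or_ge k n with h' | h'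
      · exact Or.inl ⟨k, h', hgk⟩
      · have : k = n := by omega
        subst this
        exact Or.inr (by simp [hgk])

theorem memB_iff {g : ℕ → ℕ} (hge : ∀ k, k ≤ g k) (x : ℕ) :
    memB g x = true ↔ x ∈ Set.range g := by
  have h : memB g x = true ↔ ∃ k < x + 1, g k = x := memB_rec_iff g x (x + 1)
  rw [h]
  constructor
  · rintro ⟨k, _, hk⟩
    exact ⟨k, hk⟩
  · rintro ⟨k, hk⟩
    refine ⟨k, ?_, hk⟩
    have := hge k
    omega

set_option maxHeartbeats 1000000 in
theorem XD_dense {D : ℕ → Finset ℕ} (hD : Computable D) : MathiasDense (XD D) := by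
  intro c
  obtain ⟨fA, hfA, hfeq⟩ := ComputablePred.computable_iff.1 c.comp
  have hmemA : ∀ y, y ∈ c.A ↔ fA y = true := fun y => iff_of_eq (congrFun hfeq y)
  -- the max of each canonical set
  set mD : ℕ → ℕ := fun i => lmax (aL (Encodable.encode (D i))) with hmD_def
  have hmD_comp : Computable mD :=
    ((primrec_lmax.comp primrec_aL).to_comp).comp (primrec_encodeF.to_comp.comp hD)
  have hmD_le : ∀ i x, x ∈ D i → x ≤ mD i := fun i x hx => le_lmax (mem_aL_encode.2 hx)
  have hB_le : ∀ i k, i ≤ k → mD i ≤ BFn mD k := by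
    intro i k
    induction k with
    | zero =>
      intro h
      have : i = 0 := by omega
      subst this
      exact le_refl _
    | succ k ih =>
      intro h
      rcases Nat.lt_or_ge i (k + 1) with h' | h'
      · exact le_trans (ih (by omega)) (le_max_left _ _)
      · have : i = k + 1 := by omega
        subst this
        exact le_max_right _ _
  have H : ∀ t, ∃ x, (fA x && decide (t < x)) = true := by
    intro t
    rcases c.infinite.exists_gt t with ⟨x, hxA, htx⟩
    refine ⟨x, ?_⟩
    rw [Bool.and_eq_true]
    exact ⟨(hmemA x).1 hxA, by simp [htx]⟩
  have hnext_A : ∀ t, nextFn fA H t ∈ c.A := by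
    intro t
    have := Nat.find_spec (H t)
    rw [Bool.and_eq_true] at this
    exact (hmemA _).2 this.1
  have hnext_gt : ∀ t, t < nextFn fA H t := by
    intro t
    have := Nat.find_spec (H t)
    rw [Bool.and_eq_true] at this
    exact of_decide_eq_true this.2
  set g : ℕ → ℕ := gFn fA mD H c.a.card with hg_def
  have hg0 : g 0 = nextFn fA H (BFn mD c.a.card) := rfl
  have hgs : ∀ k, g (k + 1) = nextFn fA H (max (g k) (BFn mD (c.a.card + k + 1))) :=
    fun k => rfl
  have hgA : ∀ k, g k ∈ c.A := by
    intro k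
    cases k with
    | zero => rw [hg0]; exact hnext_A _
    | succ k => rw [hgs]; exact hnext_A _
  have hg_gt : ∀ k, BFn mD (c.a.card + k) < g k := by
    intro k
    cases k with
    | zero => rw [hg0, Nat.add_zero]; exact hnext_gt _
    | succ k =>
      rw [hgs]
      calc BFn mD (c.a.card + (k + 1)) = BFn mD (c.a.card + k + 1) := by ring_nf
        _ ≤ max (g k) (BFn mD (c.a.card + k + 1)) := le_max_right _ _
        _ < _ := hnext_gt _
  have hg_mono : StrictMono g := by
    apply strictMono_nat_of_lt_succ
    intro k
    rw [hgs]
    exact lt_of_le_of_lt (le_max_left _ _) (hnext_gt _)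
  have hg_ge : ∀ k, k ≤ g k := by
    intro k
    induction k with
    | zero => exact Nat.zero_le _
    | succ k ih => exact Nat.succ_le_of_lt (lt_of_le_of_lt ih (hg_mono (Nat.lt_succ_self k)))
  have hA'_comp : ComputablePred (· ∈ Set.range g) := by
    apply ComputablePred.computable_iff.2
    refine ⟨memB g, computable_memB (computable_gFn hfA hmD_comp H c.a.card), ?_⟩
    funext x
    exact propext (memB_iff hg_ge x).symm
  have hA'_inf : (Set.range g).Infinite := Set.infinite_range_of_injective hg_mono.injective
  have hA'_sub : Set.range g ⊆ c.A := by
    rintro y ⟨k, rfl⟩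
    exact hgA k
  refine ⟨⟨c.a, Set.range g, hA'_inf, hA'_comp, ?_⟩, ?_, ?_, ?_, ?_⟩
  · intro x hx y hy
    exact c.lt x hx y (hA'_sub hy)
  · -- membership in the family XD
    intro i hsub
    by_contra hcon
    push_neg at hcon
    obtain ⟨hns, hcard⟩ := hcon
    have hicard : i < (D i).card := by omega
    -- the elements of D i outside c.a
    have hT_ne : ((D i).filter (fun y => y ∉ c.a)).Nonempty := by
      rcases Set.not_subset.1 hns with ⟨x, hx, hxna⟩
      have hx' : x ∈ D i := by exact_mod_cast hx
      exact ⟨x, Finset.mem_filter.2 ⟨hx', by simpa using hxna⟩⟩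
    set T := (D i).filter (fun y => y ∉ c.a) with hT_def
    set y0 := T.max' hT_ne with hy0_def
    have hy0T : y0 ∈ T := T.max'_mem hT_ne
    have hy0D : y0 ∈ D i := (Finset.mem_filter.1 hy0T).1
    have hy0na : y0 ∉ c.a := by
      have := (Finset.mem_filter.1 hy0T).2
      simpa using this
    have hy0r : y0 ∈ Set.range g := by
      rcases hsub (Finset.mem_coe.2 hy0D) with h' | h'
      · exact absurd (Finset.mem_coe.1 h') hy0na
      · exact h'
    obtain ⟨k0, hk0⟩ := hy0r
    -- D i is contained in c.a together with the first k0+1 values of g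
    have hDsub : D i ⊆ c.a ∪ (Finset.range (k0 + 1)).image g := by
      intro y hy
      by_cases hya : y ∈ c.a
      · exact Finset.mem_union_left _ hya
      · have hyT : y ∈ T := Finset.mem_filter.2 ⟨hy, by simpa using hya⟩
        have hyr : y ∈ Set.range g := by
          rcases hsub (Finset.mem_coe.2 hy) with h' | h'
          · exact absurd (Finset.mem_coe.1 h') hya
          · exact h'
        obtain ⟨k, hk⟩ := hyr
        have hkk0 : k ≤ k0 := by
          apply hg_mono.le_iff_le.1
          rw [hk, hk0]
          exact T.le_max' y hyT
        apply Finset.mem_union_right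
        exact Finset.mem_image.2 ⟨k, Finset.mem_range.2 (by omega), hk⟩
    have hcard2 : (D i).card ≤ c.a.card + (k0 + 1) := by
      calc (D i).card ≤ (c.a ∪ (Finset.range (k0 + 1)).image g).card :=
            Finset.card_le_card hDsub
        _ ≤ c.a.card + ((Finset.range (k0 + 1)).image g).card := Finset.card_union_le _ _
        _ ≤ c.a.card + (k0 + 1) := by
            have := Finset.card_image_le (s := Finset.range (k0 + 1)) (f := g)
            simpa using this
    have hik : i ≤ c.a.card + k0 := by omega
    have : y0 ≤ mD i := hmD_le i y0 hy0D
    have : mD i ≤ BFn mD (c.a.card + k0) := hB_le i _ hik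
    have : BFn mD (c.a.card + k0) < g k0 := hg_gt k0
    omega
  · exact Finset.Subset.refl _
  · intro y hy
    simp only [Set.mem_diff] at hy
    exact absurd hy.1 hy.2
  · exact hA'_sub

/-! ### Immunity of the generic -/

theorem generic_immune {R : Set ℕ} (hR : MathiasGeneric R) {D : ℕ → Finset ℕ}
    (hD : Computable D) : ∀ᶠ i in Filter.atTop, ↑(D i) ⊆ R → (D i).card ≤ i := by
  rcases hR (XD D) (XD_arith hD) (XD_dense hD) with ⟨c, hcX, hma, hmA⟩
  rw [Filter.eventually_atTop]
  refine ⟨c.a.card, fun i hi hsub => ?_⟩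
  have h2 : ↑(D i) ⊆ ↑c.a ∪ c.A := hsub.trans hmA
  rcases hcX i h2 with h | h
  · calc (D i).card ≤ c.a.card := Finset.card_le_card (Finset.coe_subset.1 h)
      _ ≤ i := hi
  · exact h


end MGaux

/-- Every Mathias generic is canonically immune, with modulus of immunity the identity. -/
theorem mathias_generic_canonically_immune :
    ∀ R : Set ℕ, MathiasGeneric R → CanonImmuneMod R id := by
  intro R hR
  refine ⟨MGaux.generic_infinite hR, fun D hD => ?_⟩
  have h := MGaux.generic_immune hR hD.1
  simpa using h
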